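/- Let D be an algebraic division ring of characteristic zero with infinite center F, let n ≥ 1, and let f ∈ F⟨X⟩ be neither a polynomial identity nor a central polynomial of M_n(D). Then M_n(D) = Z(M_n(D)) + span f(M_n(D)). -/

import Mathlib

set_option linter.unusedSectionVars false
set_option linter.unnecessarySimpa false
set_option linter.unusedVariables false
set_option maxHeartbeats 1000000

open Polynomial

section Prelim

-- char zero for the center
lemma centerCharZero (D : Type*) [DivisionRing D] [CharZero D] :
    CharZero (Subring.center D) := by
  constructor
  intro a b h
  have : ((a : Subring.center D) : D) = ((b : Subring.center D) : D) := by rw [h]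
  simpa using this

-- Vandermonde-type lemma over an infinite field
theorem coeff_mem_of_sum_mem {K M : Type*} [Field K] [Infinite K] [AddCommGroup M] [Module K M]
    (W : Submodule K M) (N : ℕ) (c : ℕ → M)
    (h : ∀ t : K, (∑ k ∈ Finset.range N, t ^ k • c k) ∈ W) :
    ∀ k, k < N → c k ∈ W := by
  intro k hk
  by_contra hne
  set π := W.mkQ with hπ
  have hπk : π (c k) ≠ 0 := by
    intro h0
    exact hne (by rwa [hπ, Submodule.mkQ_apply, Submodule.Quotient.mk_eq_zero] at h0)
  have hq : ∀ t : K, ∑ j ∈ Finset.range N, t ^ j • π (c j) = 0 := by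
    intro t
    have : π (∑ j ∈ Finset.range N, t ^ j • c j) = 0 := by
      rw [hπ, Submodule.mkQ_apply, Submodule.Quotient.mk_eq_zero]; exact h t
    rw [map_sum] at this
    simpa [map_smul] using this
  obtain ⟨φ, hφ⟩ : ∃ φ : Module.Dual K (M ⧸ W), φ (π (c k)) ≠ 0 := by
    by_contra hall
    push_neg at hall
    exact hπk ((Module.forall_dual_apply_eq_zero_iff K _).mp hall)
  set p : Polynomial K := ∑ j ∈ Finset.range N, Polynomial.monomial j (φ (π (c j))) with hp
  have hz : ∀ t, p.eval t = 0 := by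
    intro t
    rw [hp]
    rw [Polynomial.eval_finset_sum]
    have := congrArg φ (hq t)
    rw [map_sum] at this
    simpa [Polynomial.eval_monomial, mul_comm] using this
  have hp0 : p = 0 := Polynomial.zero_of_eval_zero p hz
  have : p.coeff k = φ (π (c k)) := by
    rw [hp, Polynomial.finset_sum_coeff]
    rw [Finset.sum_eq_single k]
    · simp [Polynomial.coeff_monomial]
    · intro b _ hbk; simp [Polynomial.coeff_monomial, hbk]
    · intro hkn; exact absurd (Finset.mem_range.mpr hk) hkn
  rw [hp0] at this
  simp at this
  exact hφ this.symm

end Prelim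

section PolyDiv

variable {D : Type*} [DivisionRing D]

-- eval is left-linear in constants
lemma eval_C_mul'' (b : D) (p : Polynomial D) (c : D) :
    (C b * p).eval c = b * p.eval c := by
  have hdeg : (C b * p).natDegree < p.natDegree + 1 :=
    lt_of_le_of_lt (natDegree_C_mul_le b p) (lt_add_one _)
  rw [eval_eq_sum_range' hdeg, eval_eq_sum_range' (lt_add_one p.natDegree), Finset.mul_sum]
  exact Finset.sum_congr rfl fun k _ => by rw [coeff_C_mul, mul_assoc]

lemma eval_mul_X'' (p : Polynomial D) (c : D) : (p * X).eval c = p.eval c * c := by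
  have hdeg : (p * X).natDegree < p.natDegree + 2 := by
    have := Polynomial.natDegree_mul_le (p := p) (q := (X : Polynomial D))
    simp only [Polynomial.natDegree_X] at this; omega
  rw [eval_eq_sum_range' hdeg, eval_eq_sum_range' (lt_add_one p.natDegree), Finset.sum_mul]
  rw [Finset.sum_range_succ']
  have h0 : (p * X).coeff 0 = 0 := by
    rw [Polynomial.mul_coeff_zero]; simp
  rw [h0]
  simp only [Polynomial.coeff_mul_X, zero_mul, add_zero, pow_zero]
  refine Finset.sum_congr rfl fun k _ => ?_
  rw [pow_succ, mul_assoc]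

lemma eval_mul_X_pow'' (p : Polynomial D) (k : ℕ) (c : D) :
    (p * X ^ k).eval c = p.eval c * c ^ k := by
  induction k with
  | zero => simp
  | succ k ih =>
      rw [pow_succ, ← mul_assoc, eval_mul_X'', ih, pow_succ, mul_assoc]

/-- key noncommutative product evaluation formula -/
lemma eval_mul'' (p q : Polynomial D) (c : D) :
    (p * q).eval c = ∑ k ∈ Finset.range (p.natDegree + 1), p.coeff k * q.eval c * c ^ k := by
  conv_lhs => rw [p.as_sum_range' (p.natDegree + 1) (lt_add_one _), Finset.sum_mul]
  rw [Polynomial.eval_finset_sum]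
  refine Finset.sum_congr rfl fun k _ => ?_
  rw [← Polynomial.C_mul_X_pow_eq_monomial, mul_assoc, Polynomial.X_pow_mul, ← mul_assoc,
    eval_mul_X_pow'', eval_C_mul'', mul_assoc]

lemma eval_mul_zero'' (p q : Polynomial D) (c : D) (hq : q.eval c = 0) :
    (p * q).eval c = 0 := by
  rw [eval_mul'']
  exact Finset.sum_eq_zero fun k _ => by rw [hq, mul_zero, zero_mul]

lemma eval_mul_ne_zero'' (p q : Polynomial D) (c : D) (he : q.eval c ≠ 0) :
    (p * q).eval c = p.eval ((q.eval c) * c * (q.eval c)⁻¹) * (q.eval c) := by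
  set u : Dˣ := Units.mk0 (q.eval c) he with hu
  have hue : (↑u : D) = q.eval c := rfl
  have hcoe : (q.eval c * c * (q.eval c)⁻¹) = ↑u * c * ↑u⁻¹ := by
    rw [hu]; simp
  rw [eval_mul'', hcoe, eval_eq_sum_range' (lt_add_one p.natDegree), Finset.sum_mul]
  refine Finset.sum_congr rfl fun k _ => ?_
  rw [Units.conj_pow, ← hue]
  simp only [mul_assoc]
  rw [Units.inv_mul, mul_one]

/-- division with remainder by X - C c (right roots) -/
lemma exists_div_X_sub_C (p : Polynomial D) (c : D) :
    ∃ q, p = q * (X - C c) + C (p.eval c) := by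
  suffices H : ∀ N : ℕ, ∀ p : Polynomial D, p.natDegree ≤ N → ∃ q, p = q * (X - C c) + C (p.eval c) by
    exact H p.natDegree p le_rfl
  intro N
  induction N with
  | zero =>
      intro p hp
      refine ⟨0, ?_⟩
      have h0 : p.natDegree = 0 := Nat.le_zero.mp hp
      conv_lhs => rw [Polynomial.eq_C_of_natDegree_eq_zero h0]
      have : p.eval c = p.coeff 0 := by
        conv_lhs => rw [Polynomial.eq_C_of_natDegree_eq_zero h0]
        rw [eval_C]
      rw [this, zero_mul, zero_add]
  | succ N ih =>
      intro p hp
      by_cases h0 : p.natDegree ≤ N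
      · exact ih p h0
      have hd : p.natDegree = N + 1 := le_antisymm hp (not_le.mp h0)
      set l := p.leadingCoeff with hl
      set r : Polynomial D := (C l * X ^ N) * (X - C c) with hr
      have hrexp : r = monomial (N + 1) l - monomial N (l * c) := by
        rw [hr, mul_sub]
        congr 1
        · rw [mul_assoc, ← pow_succ, Polynomial.C_mul_X_pow_eq_monomial]
        · rw [mul_assoc, Polynomial.X_pow_mul, ← mul_assoc, ← Polynomial.C_mul,
            Polynomial.C_mul_X_pow_eq_monomial]
      have hreval : r.eval c = 0 := by
        apply eval_mul_zero''
        rw [eval_sub, eval_X, eval_C, sub_self]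
      have hsubdeg : (p - r).natDegree ≤ N := by
        rw [Polynomial.natDegree_le_iff_coeff_eq_zero]
        intro M hM
        rw [Polynomial.coeff_sub, hrexp, Polynomial.coeff_sub,
          Polynomial.coeff_monomial, Polynomial.coeff_monomial]
        rcases Nat.lt_or_ge M (N + 2) with hM2 | hM2
        · have hMeq : M = N + 1 := by omega
          have : p.coeff M = l := by
            rw [hMeq, hl, ← hd]; exact Polynomial.coeff_natDegree
          rw [this, if_pos hMeq.symm, if_neg (by omega)]
          simp
        · have : p.coeff M = 0 := Polynomial.coeff_eq_zero_of_natDegree_lt (by omega)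
          rw [this, if_neg (by omega), if_neg (by omega)]
          simp
      obtain ⟨q', hq'⟩ := ih (p - r) hsubdeg
      refine ⟨q' + C l * X ^ N, ?_⟩
      have heval2 : (p - r).eval c = p.eval c := by rw [eval_sub, hreval, sub_zero]
      rw [heval2] at hq'
      calc p = (p - r) + r := by abel
      _ = (q' * (X - C c) + C (p.eval c)) + (C l * X ^ N) * (X - C c) := by rw [hq', ← hr]
      _ = (q' + C l * X ^ N) * (X - C c) + C (p.eval c) := by rw [add_mul]; abel

end PolyDiv

section Wedderburn

variable {D : Type*} [DivisionRing D]

/-- conjugation by a unit as a ring hom -/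
lemma conj_conj (u v : Dˣ) (dd : D) :
    ↑u * (↑v * dd * ↑v⁻¹) * ↑u⁻¹ = ↑(u * v) * dd * ↑(u * v)⁻¹ := by
  simp only [mul_inv_rev, Units.val_mul, mul_assoc]

def conjHom (x : Dˣ) : D →+* D where
  toFun y := ↑x * y * ↑x⁻¹
  map_one' := by simp
  map_mul' a b := by
    show ↑x * (a * b) * ↑x⁻¹ = (↑x * a * ↑x⁻¹) * (↑x * b * ↑x⁻¹)
    rw [show (↑x * a * ↑x⁻¹) * (↑x * b * ↑x⁻¹) = ↑x * (a * ((↑x⁻¹ * ↑x) * b)) * ↑x⁻¹ from by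
      simp only [mul_assoc], Units.inv_mul, one_mul, mul_assoc]
  map_zero' := by simp
  map_add' a b := by
    show ↑x * (a + b) * ↑x⁻¹ = ↑x * a * ↑x⁻¹ + ↑x * b * ↑x⁻¹
    rw [mul_add, add_mul]

lemma conjHom_apply (x : Dˣ) (y : D) : conjHom x y = ↑x * y * ↑x⁻¹ := rfl

/-- evaluation of a central-coefficient polynomial at a conjugate -/
lemma eval_conj_central (P : Polynomial D) (hP : ∀ k, P.coeff k ∈ Subring.center D)
    (dd : D) (x : Dˣ) :
    P.eval (↑x * dd * ↑x⁻¹) = ↑x * P.eval dd * ↑x⁻¹ := by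
  rw [eval_eq_sum_range' (lt_add_one P.natDegree), eval_eq_sum_range' (lt_add_one P.natDegree)]
  rw [Finset.mul_sum, Finset.sum_mul]
  refine Finset.sum_congr rfl fun k _ => ?_
  rw [Units.conj_pow]
  have hcomm : ↑x * P.coeff k = P.coeff k * ↑x :=
    (Subring.mem_center_iff.mp (hP k) ↑x)
  calc P.coeff k * (↑x * dd ^ k * ↑x⁻¹) = (P.coeff k * ↑x) * dd ^ k * ↑x⁻¹ := by
        simp only [mul_assoc]
  _ = (↑x * P.coeff k) * dd ^ k * ↑x⁻¹ := by rw [← hcomm]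
  _ = ↑x * (P.coeff k * dd ^ k) * ↑x⁻¹ := by simp only [mul_assoc]

/-- map of a polynomial under conjugation evaluated appropriately -/
lemma eval_map_conj (h : Polynomial D) (x : Dˣ) (y : D) :
    (h.map (conjHom x)).eval (conjHom x y) = conjHom x (h.eval y) := by
  rw [Polynomial.eval_map, Polynomial.eval₂_at_apply]

/-- every element of D is "commutes with all units implies central" -/
lemma central_of_units_comm (a : D) (h : ∀ x : Dˣ, ↑x * a = a * ↑x) :
    a ∈ Subring.center D := by
  rw [Subring.mem_center_iff]
  intro g
  rcases eq_or_ne g 0 with rfl | hg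
  · simp
  · exact h (Units.mk0 g hg)

/-- key minimality: a monic polynomial vanishing on a full conjugacy class of an
algebraic element has degree at least that of the minimal polynomial -/
theorem minpoly_le_of_vanish (d : D) (hi : IsIntegral (Subring.center D) d) :
    ∀ (N : ℕ) (h : Polynomial D), h.natDegree ≤ N → h.Monic →
      (∀ x : Dˣ, h.eval (↑x * d * ↑x⁻¹) = 0) →
      (minpoly (Subring.center D) d).natDegree ≤ h.natDegree := by
  intro N
  induction N with
  | zero =>
      intro h hdeg hmonic hvan
      -- h = 1, but 1 cannot vanish
      exfalso
      have h1 : h = 1 := Polynomial.eq_one_of_monic_natDegree_zero hmonic (Nat.le_zero.mp hdeg)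
      have := hvan 1
      rw [h1] at this
      simp at this
  | succ N ih =>
      intro h hdeg hmonic hvan
      by_cases hN : h.natDegree ≤ N
      · exact ih h hN hmonic hvan
      by_cases hfix : ∀ x : Dˣ, h.map (conjHom x) = h
      · -- coefficients are central; lift to the center and use minpoly.dvd
        have hcent : ∀ k, h.coeff k ∈ Subring.center D := by
          intro k
          apply central_of_units_comm
          intro x
          have := congrArg (fun q => Polynomial.coeff q k) (hfix x)
          simp only [Polynomial.coeff_map, conjHom_apply] at this
          calc ↑x * h.coeff k = (↑x * h.coeff k * ↑x⁻¹) * ↑x := by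
                rw [mul_assoc, Units.inv_mul, mul_one]
          _ = h.coeff k * ↑x := by rw [this]
        set h' : Polynomial (Subring.center D) :=
          ∑ k ∈ Finset.range (h.natDegree + 1), Polynomial.monomial k (⟨h.coeff k, hcent k⟩ : Subring.center D)
          with hh'
        have hmap : h'.map (algebraMap (Subring.center D) D) = h := by
          ext M
          rw [Polynomial.coeff_map, hh', Polynomial.finset_sum_coeff]
          by_cases hM : M ≤ h.natDegree
          · rw [Finset.sum_eq_single M]
            · simp only [Polynomial.coeff_monomial, if_pos rfl]
              rfl
            · intro b _ hbM; simp [Polynomial.coeff_monomial, hbM]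
            · intro hMn; exact absurd (Finset.mem_range.mpr (by omega)) hMn
          · push_neg at hM
            have h0 : h.coeff M = 0 := Polynomial.coeff_eq_zero_of_natDegree_lt hM
            rw [h0]
            rw [Finset.sum_eq_zero]
            · simp
            · intro b hb
              have : b ≠ M := by
                intro hbM; rw [Finset.mem_range] at hb; omega
              simp [Polynomial.coeff_monomial, this]
        have haev : (Polynomial.aeval d) h' = 0 := by
          rw [Polynomial.aeval_def, ← Polynomial.eval_map, hmap]
          have := hvan 1
          simpa using this
        have hdvd : minpoly (Subring.center D) d ∣ h' := minpoly.dvd _ d haev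
        have hne : h' ≠ 0 := by
          intro h0
          have : h'.map (algebraMap (Subring.center D) D) = 0 := by rw [h0, Polynomial.map_zero]
          rw [hmap] at this
          exact hmonic.ne_zero this
        have := Polynomial.natDegree_le_of_dvd hdvd hne
        have hdeg' : h'.natDegree ≤ h.natDegree := by
          rw [Polynomial.natDegree_le_iff_coeff_eq_zero]
          intro M hM
          have : (h'.map (algebraMap (Subring.center D) D)).coeff M = 0 := by
            rw [hmap]; exact Polynomial.coeff_eq_zero_of_natDegree_lt hM
          rw [Polynomial.coeff_map] at this
          exact (map_eq_zero_iff _ (algebraMap (Subring.center D) D).injective).mp this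
        omega
      · -- symmetrize: subtract a conjugated copy and recurse
        push_neg at hfix
        obtain ⟨x₀, hx₀⟩ := hfix
        set g := h - h.map (conjHom x₀) with hg
        have hgne : g ≠ 0 := sub_ne_zero.mpr (fun hcontra => hx₀ hcontra.symm)
        have hmapmonic : (h.map (conjHom x₀)).Monic := hmonic.map _
        have hmapdeg : (h.map (conjHom x₀)).natDegree = h.natDegree := by
          apply le_antisymm Polynomial.natDegree_map_le
          apply Polynomial.le_natDegree_of_ne_zero
          rw [Polynomial.coeff_map]
          rw [hmonic.coeff_natDegree]
          simp
        have hgdeg : g.natDegree < h.natDegree := by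
          have hle : g.natDegree ≤ h.natDegree := by
            rw [hg]
            apply le_trans (Polynomial.natDegree_sub_le _ _)
            rw [hmapdeg]; omega
          have hcoeff : g.coeff h.natDegree = 0 := by
            rw [hg, Polynomial.coeff_sub]
            rw [hmonic.coeff_natDegree]
            have : (h.map (conjHom x₀)).coeff h.natDegree = 1 := by
              rw [Polynomial.coeff_map, hmonic.coeff_natDegree]; simp
            rw [this, sub_self]
          rcases lt_or_eq_of_le hle with hlt | heq
          · exact hlt
          · exfalso
            have := Polynomial.leadingCoeff_ne_zero.mpr hgne
            rw [Polynomial.leadingCoeff, heq] at this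
            exact this hcoeff
        -- g vanishes on the conjugacy class
        have hgvan : ∀ y : Dˣ, g.eval (↑y * d * ↑y⁻¹) = 0 := by
          intro y
          rw [hg, Polynomial.eval_sub, hvan y]
          have hpoint : (↑y * d * ↑y⁻¹ : D) = conjHom x₀ (↑(x₀⁻¹ * y) * d * ↑(x₀⁻¹ * y)⁻¹) := by
            rw [conjHom_apply, conj_conj, mul_inv_cancel_left]
          rw [hpoint, eval_map_conj h x₀ (↑(x₀⁻¹ * y) * d * ↑(x₀⁻¹ * y)⁻¹), hvan (x₀⁻¹ * y),
            map_zero, sub_zero]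
        -- monicize g and recurse
        set l := g.leadingCoeff with hl
        have hlne : l ≠ 0 := Polynomial.leadingCoeff_ne_zero.mpr hgne
        set g₂ := C l⁻¹ * g with hg₂
        have hcoefftop : g₂.coeff g.natDegree = 1 := by
          rw [hg₂, Polynomial.coeff_C_mul, Polynomial.coeff_natDegree, ← hl,
            inv_mul_cancel₀ hlne]
        have hg₂deg : g₂.natDegree = g.natDegree := by
          apply le_antisymm (Polynomial.natDegree_C_mul_le _ _)
          apply Polynomial.le_natDegree_of_ne_zero
          rw [hcoefftop]
          exact one_ne_zero
        have hg₂monic : g₂.Monic := by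
          rw [Polynomial.Monic, Polynomial.leadingCoeff, hg₂deg, hcoefftop]
        have hg₂van : ∀ y : Dˣ, g₂.eval (↑y * d * ↑y⁻¹) = 0 := fun y => by
          rw [hg₂, eval_C_mul'', hgvan y, mul_zero]
        have hrec := ih g₂ (by omega) hg₂monic hg₂van
        omega

end Wedderburn
section Harris

variable {D : Type*} [DivisionRing D]
open Polynomial

lemma list_prod_monic (L : List D) : ((L.map fun c => X - C c).prod).Monic := by
  induction L with
  | nil => simpa using Polynomial.monic_one
  | cons c L ih =>
      rw [List.map_cons, List.prod_cons]
      have h1 : (X - C c : Polynomial D).Monic := Polynomial.monic_X_sub_C c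
      have hne : (X - C c : Polynomial D).leadingCoeff * ((L.map fun c => X - C c).prod).leadingCoeff ≠ 0 := by
        rw [h1.leadingCoeff, ih.leadingCoeff, one_mul]; exact one_ne_zero
      rw [Polynomial.Monic, Polynomial.leadingCoeff_mul' hne, h1.leadingCoeff, ih.leadingCoeff, one_mul]

lemma list_prod_natDegree (L : List D) :
    ((L.map fun c => X - C c).prod).natDegree = L.length := by
  induction L with
  | nil => simp
  | cons c L ih =>
      rw [List.map_cons, List.prod_cons]
      have h1 : (X - C c : Polynomial D).Monic := Polynomial.monic_X_sub_C c
      have hne : (X - C c : Polynomial D).leadingCoeff * ((L.map fun c => X - C c).prod).leadingCoeff ≠ 0 := by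
        rw [h1.leadingCoeff, (list_prod_monic L).leadingCoeff, one_mul]; exact one_ne_zero
      rw [Polynomial.natDegree_mul' hne, ih, Polynomial.natDegree_X_sub_C, List.length_cons]
      omega

lemma list_prod_coeff : ∀ (L : List D), L ≠ [] →
    ((L.map fun c => X - C c).prod).coeff (L.length - 1) = - L.sum := by
  intro L
  induction L with
  | nil => intro h; exact absurd rfl h
  | cons c L ih =>
      intro _
      by_cases hLnil : L = []
      · subst hLnil
        simp
      · rw [List.map_cons, List.prod_cons, List.length_cons]
        have hexp : (X - C c) * (L.map fun c => X - C c).prod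
            = X * (L.map fun c => X - C c).prod - C c * (L.map fun c => X - C c).prod := by
          rw [sub_mul]
        rw [hexp, Polynomial.coeff_sub]
        have h1 : (X * (L.map fun c => X - C c).prod).coeff (L.length + 1 - 1)
            = - L.sum := by
          have hl : L.length + 1 - 1 = (L.length - 1) + 1 := by
            have := List.length_pos_iff.mpr hLnil; omega
          rw [hl, Polynomial.coeff_X_mul, ih hLnil]
        have h2 : (C c * (L.map fun c => X - C c).prod).coeff (L.length + 1 - 1) = c := by
          have hl : L.length + 1 - 1 = ((L.map fun c => X - C c).prod).natDegree := by
            rw [list_prod_natDegree]; omega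
          rw [hl, Polynomial.coeff_C_mul, Polynomial.coeff_natDegree,
            (list_prod_monic L).leadingCoeff, mul_one]
        rw [h1, h2, List.sum_cons]
        abel

lemma list_sum_sub (dd : D) : ∀ (L : List D),
    (L.map fun c => dd - c).sum = L.length • dd - L.sum := by
  intro L
  induction L with
  | nil => simp
  | cons c L ih =>
      rw [List.map_cons, List.sum_cons, ih, List.length_cons, List.sum_cons, succ_nsmul]
      abel

/-- Wedderburn factorization of the minimal polynomial over a division ring -/
theorem wedderburn_factorization [Algebra.IsAlgebraic (Subring.center D) D] (d : D) :
    ∃ L : List D, (∀ c ∈ L, ∃ x : Dˣ, c = ↑x * d * ↑x⁻¹) ∧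
      L.length = (minpoly (Subring.center D) d).natDegree ∧
      (minpoly (Subring.center D) d).map (algebraMap (Subring.center D) D)
        = (L.map fun c => X - C c).prod := by
  classical
  have hi : IsIntegral (Subring.center D) d := (Algebra.IsAlgebraic.isAlgebraic d).isIntegral
  set p := minpoly (Subring.center D) d with hp
  set m := p.natDegree with hm
  set P := p.map (algebraMap (Subring.center D) D) with hP
  have hPmonic : P.Monic := (minpoly.monic hi).map _
  have hPdeg : P.natDegree = m := (minpoly.monic hi).natDegree_map _
  have hPcent : ∀ k, P.coeff k ∈ Subring.center D := by
    intro k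
    rw [hP, Polynomial.coeff_map]
    exact SetLike.coe_mem _
  have hPvan : ∀ x : Dˣ, P.eval (↑x * d * ↑x⁻¹) = 0 := by
    intro x
    rw [eval_conj_central P hPcent d x]
    have hPd : P.eval d = 0 := by
      rw [hP, Polynomial.eval_map, ← Polynomial.aeval_def]
      exact minpoly.aeval _ _
    rw [hPd, mul_zero, zero_mul]
  -- main induction
  have main : ∀ k, k ≤ m → ∃ (g : Polynomial D) (L : List D),
      g.Monic ∧ g.natDegree = m - k ∧ L.length = k ∧
      (∀ c ∈ L, ∃ x : Dˣ, c = ↑x * d * ↑x⁻¹) ∧ P = g * (L.map fun c => X - C c).prod := by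
    intro k
    induction k with
    | zero =>
        intro _
        exact ⟨P, [], hPmonic, by rw [hPdeg]; omega, rfl, by simp, by simp⟩
    | succ k ih =>
        intro hk1
        obtain ⟨g, L, hgmonic, hgdeg, hLlen, hLconj, hPfact⟩ := ih (by omega)
        set r := (L.map fun c => X - C c).prod with hr
        have hrmonic : r.Monic := list_prod_monic L
        have hrdeg : r.natDegree = k := by rw [hr, list_prod_natDegree, hLlen]
        -- r cannot vanish on the whole conjugacy class
        have : ¬(∀ x : Dˣ, r.eval (↑x * d * ↑x⁻¹) = 0) := by
          intro hvan
          have hcon := minpoly_le_of_vanish d hi r.natDegree r le_rfl hrmonic hvan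
          rw [hrdeg, ← hp, ← hm] at hcon
          omega
        push_neg at this
        obtain ⟨x, hx⟩ := this
        set e := r.eval (↑x * d * ↑x⁻¹) with he
        have h0 : g.eval (e * (↑x * d * ↑x⁻¹) * e⁻¹) * e = 0 := by
          rw [← eval_mul_ne_zero'' g r (↑x * d * ↑x⁻¹) hx, ← hPfact]
          exact hPvan x
        have hgroot : g.eval (e * (↑x * d * ↑x⁻¹) * e⁻¹) = 0 := by
          rcases mul_eq_zero.mp h0 with h | h
          · exact h
          · exact absurd h hx
        -- the new root is a conjugate of d
        set u : Dˣ := (Units.mk0 e hx) * x with hu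
        have huconj : e * (↑x * d * ↑x⁻¹) * e⁻¹ = ↑u * d * ↑u⁻¹ := by
          rw [hu, ← conj_conj (Units.mk0 e hx) x d]
          rfl
        obtain ⟨q, hq⟩ := exists_div_X_sub_C g (e * (↑x * d * ↑x⁻¹) * e⁻¹)
        rw [hgroot, map_zero, add_zero] at hq
        set c' := e * (↑x * d * ↑x⁻¹) * e⁻¹ with hc'
        -- q is monic of the right degree
        have hgne : g ≠ 0 := hgmonic.ne_zero
        have hqne : q ≠ 0 := by
          intro h0
          rw [h0, zero_mul] at hq
          exact hgne hq
        have hlcne : q.leadingCoeff * (X - C c').leadingCoeff ≠ 0 := by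
          rw [(Polynomial.monic_X_sub_C c').leadingCoeff, mul_one]
          exact Polynomial.leadingCoeff_ne_zero.mpr hqne
        have hqdeg : g.natDegree = q.natDegree + 1 := by
          rw [hq, Polynomial.natDegree_mul' hlcne, Polynomial.natDegree_X_sub_C]
        have hqmonic : q.Monic := by
          have := Polynomial.leadingCoeff_mul' hlcne
          rw [← hq, (Polynomial.monic_X_sub_C c').leadingCoeff, mul_one] at this
          rw [Polynomial.Monic, ← this, hgmonic.leadingCoeff]
        have hkm : k < m := by omega
        refine ⟨q, c' :: L, hqmonic, by omega, by simp [hLlen], ?_, ?_⟩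
        · intro cc hcc
          rcases List.mem_cons.mp hcc with hcc | hcc
          · exact ⟨u, by rw [hcc, ← huconj]⟩
          · exact hLconj cc hcc
        · rw [List.map_cons, List.prod_cons, hPfact, hq, ← hr, mul_assoc]
  obtain ⟨g, L, hgmonic, hgdeg, hLlen, hLconj, hPfact⟩ := main m le_rfl
  have hg1 : g = 1 := Polynomial.eq_one_of_monic_natDegree_zero hgmonic (by omega)
  rw [hg1, one_mul] at hPfact
  exact ⟨L, hLconj, hLlen, hPfact⟩

end Harris
section HarrisMain

variable {D : Type*} [DivisionRing D]
open Polynomial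

theorem harris_center [CharZero D] [Algebra.IsAlgebraic (Subring.center D) D] (d : D) :
    ∃ lam : Subring.center D, d - algebraMap (Subring.center D) D lam ∈
      Submodule.span (Subring.center D) {y : D | ∃ a b : D, y = a * b - b * a} := by
  classical
  haveI : CharZero (Subring.center D) := centerCharZero D
  have hi : IsIntegral (Subring.center D) d := (Algebra.IsAlgebraic.isAlgebraic d).isIntegral
  obtain ⟨L, hconj, hlen, hfact⟩ := wedderburn_factorization d
  set F := Subring.center D with hF
  set p := minpoly F d with hp
  set m := p.natDegree with hm
  have hmpos : 0 < m := minpoly.natDegree_pos hi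
  have hLne : L ≠ [] := by
    intro h
    rw [h] at hlen
    simp at hlen
    omega
  have hco : (algebraMap F D) (p.coeff (m - 1)) = - L.sum := by
    have h1 := list_prod_coeff L hLne
    rw [← hfact, Polynomial.coeff_map, hlen] at h1
    exact h1
  have hsum : L.sum = algebraMap F D (- p.coeff (m - 1)) := by
    rw [map_neg, hco, neg_neg]
  have hdiff : (L.map fun c => d - c).sum = m • d - algebraMap F D (- p.coeff (m - 1)) := by
    rw [list_sum_sub, hlen, hsum]
  set W := Submodule.span F {y : D | ∃ a b : D, y = a * b - b * a} with hW
  have hmemL : ∀ y ∈ (L.map fun c => d - c), y ∈ W := by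
    intro y hy
    rw [List.mem_map] at hy
    obtain ⟨c, hcL, rfl⟩ := hy
    obtain ⟨x, rfl⟩ := hconj c hcL
    apply Submodule.subset_span
    refine ⟨↑x⁻¹, ↑x * d, ?_⟩
    rw [Units.inv_mul_cancel_left]
  have hsummem : (L.map fun c => d - c).sum ∈ W := list_sum_mem hmemL
  have hmne : ((m : ℕ) : F) ≠ 0 := Nat.cast_ne_zero.mpr (by omega)
  refine ⟨((m : ℕ) : F)⁻¹ * (- p.coeff (m - 1)), ?_⟩
  have key : d - algebraMap F D (((m : ℕ) : F)⁻¹ * (- p.coeff (m - 1)))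
      = ((m : ℕ) : F)⁻¹ • ((L.map fun c => d - c).sum) := by
    rw [hdiff, smul_sub, ← Nat.cast_smul_eq_nsmul F m d, smul_smul, inv_mul_cancel₀ hmne,
      one_smul, Algebra.smul_def, ← map_mul]
  rw [key]
  exact W.smul_mem _ hsummem

end HarrisMain
section Lie

variable {K B : Type*} [Field K] [Infinite K] [Ring B] [Algebra K B]

/-- evaluation at a central point as an algebra hom -/
noncomputable def evalCentral (t : K) : Polynomial B →ₐ[K] B :=
  Polynomial.eval₂AlgHom (AlgHom.id K B) (algebraMap K B t)
    (fun b => (Algebra.commutes t b).symm)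

lemma evalCentral_apply (t : K) (p : Polynomial B) :
    evalCentral t p = Polynomial.eval₂ (RingHom.id B) (algebraMap K B t) p := rfl

theorem derivation_eval_mem (f : FreeAlgebra K ℕ) (u : B) (a : ℕ → B) :
    u * (FreeAlgebra.lift K a f) - (FreeAlgebra.lift K a f) * u ∈
      Submodule.span K (Set.range fun a : ℕ → B => FreeAlgebra.lift K a f) := by
  classical
  set V := Submodule.span K (Set.range fun a : ℕ → B => FreeAlgebra.lift K a f) with hV
  set δ : B → B := fun x => u * x - x * u with hδ
  set Ahat : ℕ → Polynomial B := fun i => C (a i) + X * C (δ (a i)) with hAhat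
  set P : Polynomial B := FreeAlgebra.lift K Ahat f with hP
  -- coefficients of P
  have key : ∀ g : FreeAlgebra K ℕ,
      (FreeAlgebra.lift K Ahat g).coeff 0 = FreeAlgebra.lift K a g ∧
      (FreeAlgebra.lift K Ahat g).coeff 1 = δ (FreeAlgebra.lift K a g) := by
    intro g
    induction g using FreeAlgebra.induction with
    | grade0 r =>
        rw [AlgHom.commutes, AlgHom.commutes]
        constructor
        · simp [Polynomial.algebraMap_apply]
        · simp only [Polynomial.algebraMap_apply, Polynomial.coeff_C, hδ]
          simp [Algebra.commutes]
    | grade1 i =>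
        have h1 : FreeAlgebra.lift K Ahat (FreeAlgebra.ι K i) = Ahat i := by
          simp [FreeAlgebra.lift_ι_apply]
        have h2 : FreeAlgebra.lift K a (FreeAlgebra.ι K i) = a i := by
          simp [FreeAlgebra.lift_ι_apply]
        rw [h1, h2, hAhat]
        constructor
        · simp [Polynomial.mul_coeff_zero]
        · have : (X * C (δ (a i)) : Polynomial B).coeff 1 = δ (a i) := by
            have := Polynomial.coeff_X_mul (C (δ (a i))) 0
            simpa using this
          simp [this]
    | mul x y hx hy =>
        rw [map_mul, map_mul]
        constructor
        · rw [Polynomial.mul_coeff_zero, hx.1, hy.1]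
        · have hcm : ((FreeAlgebra.lift K Ahat x) * (FreeAlgebra.lift K Ahat y)).coeff 1 =
              (FreeAlgebra.lift K Ahat x).coeff 0 * (FreeAlgebra.lift K Ahat y).coeff 1 +
              (FreeAlgebra.lift K Ahat x).coeff 1 * (FreeAlgebra.lift K Ahat y).coeff 0 := by
            rw [Polynomial.coeff_mul]
            have : Finset.HasAntidiagonal.antidiagonal (1 : ℕ) = {(0,1),(1,0)} := by decide
            rw [this]
            simp
          rw [hcm, hx.1, hx.2, hy.1, hy.2, hδ]
          dsimp only
          noncomm_ring
    | add x y hx hy =>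
        rw [map_add, map_add]
        constructor
        · rw [Polynomial.coeff_add, hx.1, hy.1]
        · rw [Polynomial.coeff_add, hx.2, hy.2, hδ]
          dsimp only
          noncomm_ring
  -- evaluation of P at central points
  have heval : ∀ t : K, evalCentral t P = FreeAlgebra.lift K (fun i => a i + t • δ (a i)) f := by
    intro t
    have : (evalCentral (B := B) t).comp (FreeAlgebra.lift K Ahat) =
        FreeAlgebra.lift K (fun i => a i + t • δ (a i)) := by
      apply FreeAlgebra.hom_ext
      funext i
      simp only [AlgHom.coe_comp, Function.comp_apply, FreeAlgebra.lift_ι_apply]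
      rw [hAhat]
      dsimp only
      rw [map_add, map_mul]
      rw [evalCentral_apply, evalCentral_apply, evalCentral_apply,
        Polynomial.eval₂_C, Polynomial.eval₂_C, Polynomial.eval₂_X, RingHom.id_apply,
        RingHom.id_apply, Algebra.smul_def]
    calc evalCentral t P = ((evalCentral (B := B) t).comp (FreeAlgebra.lift K Ahat)) f := rfl
    _ = _ := by rw [this]
  -- sum representation
  have hsum : ∀ t : K, evalCentral t P = ∑ k ∈ Finset.range (P.natDegree + 1), t ^ k • P.coeff k := by
    intro t
    rw [evalCentral_apply, Polynomial.eval₂_eq_sum_range]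
    refine Finset.sum_congr rfl fun k _ => ?_
    rw [RingHom.id_apply, Algebra.smul_def, ← map_pow]
    exact (Algebra.commutes (t ^ k) (P.coeff k)).symm
  -- membership
  have hmem : ∀ t : K, (∑ k ∈ Finset.range (P.natDegree + 2), t ^ k • P.coeff k) ∈ V := by
    intro t
    have h1 : (∑ k ∈ Finset.range (P.natDegree + 1), t ^ k • P.coeff k) ∈ V := by
      rw [← hsum, heval]
      exact Submodule.subset_span ⟨_, rfl⟩
    rw [Finset.sum_range_succ]
    have : P.coeff (P.natDegree + 1) = 0 :=
      Polynomial.coeff_eq_zero_of_natDegree_lt (Nat.lt_succ_self _)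
    rw [this]
    simpa using h1
  have := coeff_mem_of_sum_mem V (P.natDegree + 2) P.coeff hmem 1 (by omega)
  rw [(key f).2] at this
  rw [hδ] at this
  exact this

theorem lie_mem_span (f : FreeAlgebra K ℕ) (u v : B)
    (hv : v ∈ Submodule.span K (Set.range fun a : ℕ → B => FreeAlgebra.lift K a f)) :
    u * v - v * u ∈ Submodule.span K (Set.range fun a : ℕ → B => FreeAlgebra.lift K a f) := by
  set V := Submodule.span K (Set.range fun a : ℕ → B => FreeAlgebra.lift K a f) with hV
  induction hv using Submodule.span_induction with
  | mem x hx =>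
      obtain ⟨a, rfl⟩ := hx
      exact derivation_eval_mem f u a
  | zero => simpa using V.zero_mem
  | add x y _ _ hx hy =>
      have : u * (x + y) - (x + y) * u = (u * x - x * u) + (u * y - y * u) := by noncomm_ring
      rw [this]; exact V.add_mem hx hy
  | smul t x _ hx =>
      have : u * (t • x) - (t • x) * u = t • (u * x - x * u) := by
        rw [smul_sub, mul_smul_comm, smul_mul_assoc]
      rw [this]; exact V.smul_mem t hx

end Lie
section Herstein

variable {K R : Type*} [Field K] [CharZero K] [Ring R] [Algebra K R] [Nontrivial R]

theorem herstein
    (hsimp : ∀ c : R, c ≠ 0 → ∃ (m : ℕ) (uu vv : Fin m → R), (∑ i, uu i * c * vv i) = 1)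
    (U : Submodule K R) (hlie : ∀ u ∈ U, ∀ x : R, u * x - x * u ∈ U)
    (v₀ : R) (hv₀ : v₀ ∈ U) (w₀ : R) (hnc : v₀ * w₀ ≠ w₀ * v₀) :
    ∀ x y : R, x * y - y * x ∈ U := by
  classical
  -- 2-divisibility
  have h2 : ∀ z : R, z + z = 0 → z = 0 := by
    intro z hz
    have h2' : (2 : K) • z = 0 := by rw [two_smul]; exact hz
    have := congrArg (fun w => (2 : K)⁻¹ • w) h2'
    simpa [smul_smul, inv_mul_cancel₀ (two_ne_zero (α := K))] using this
  -- there exist noncommuting elements in U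
  by_cases hcomm : ∀ s ∈ U, ∀ t ∈ U, s * t = t * s
  · exfalso
    set δ : R → R := fun x => v₀ * x - x * v₀ with hδ
    have hδU : ∀ x, δ x ∈ U := fun x => hlie v₀ hv₀ x
    have hδ2 : ∀ x, δ (δ x) = 0 := by
      intro x
      have := hcomm v₀ hv₀ (δ x) (hδU x)
      rw [hδ]
      dsimp only
      rw [sub_eq_zero]
      exact this.symm ▸ rfl
    have hprod : ∀ x y, δ x * δ y = 0 := by
      intro x y
      apply h2
      have hexp : δ (δ (x * y)) = δ x * δ y + δ x * δ y := by
        have e1 : δ (x * y) = δ x * y + x * δ y := by rw [hδ]; dsimp only; noncomm_ring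
        rw [e1]
        have e2 : δ (δ x * y + x * δ y) = δ (δ x) * y + δ x * δ y + (δ x * δ y + x * δ (δ y)) := by
          rw [hδ]; dsimp only; noncomm_ring
        rw [e2, hδ2, hδ2]
        noncomm_ring
      rw [← hexp, hδ2]
    have hmid : ∀ x z y, δ x * z * δ y = 0 := by
      intro x z y
      have e1 : δ (z * y) = δ z * y + z * δ y := by rw [hδ]; dsimp only; noncomm_ring
      have e2 : δ x * (δ z * y + z * δ y) = 0 := by rw [← e1, hprod]
      have e3 : δ x * δ z * y + δ x * z * δ y = 0 := by
        rw [← e2]; noncomm_ring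
      rw [hprod, zero_mul, zero_add] at e3
      exact e3
    have hc : δ w₀ ≠ 0 := sub_ne_zero.mpr hnc
    obtain ⟨m, uu, vv, hone⟩ := hsimp (δ w₀) hc
    have : (1 : R) = 0 := by
      calc (1 : R) = (∑ i, uu i * δ w₀ * vv i) * (∑ j, uu j * δ w₀ * vv j) := by rw [hone, one_mul]
      _ = ∑ i, ∑ j, (uu i * δ w₀ * vv i) * (uu j * δ w₀ * vv j) := Finset.sum_mul_sum _ _ _ _
      _ = ∑ i, ∑ j, uu i * (δ w₀ * (vv i * uu j) * δ w₀) * vv j := by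
            refine Finset.sum_congr rfl fun i _ => Finset.sum_congr rfl fun j _ => ?_
            noncomm_ring
      _ = 0 := by
            refine Finset.sum_eq_zero fun i _ => Finset.sum_eq_zero fun j _ => ?_
            rw [hmid]; simp
    exact one_ne_zero this
  · push_neg at hcomm
    obtain ⟨s, hs, t, ht, hst⟩ := hcomm
    -- the subring of elements x with [x, R] ⊆ U
    set Slie : Subring R :=
      { carrier := {x | ∀ a : R, x * a - a * x ∈ U}
        zero_mem' := by intro a; simpa using U.zero_mem
        one_mem' := by intro a; simpa using U.zero_mem
        add_mem' := by
          intro x y hx hy a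
          have : (x + y) * a - a * (x + y) = (x * a - a * x) + (y * a - a * y) := by noncomm_ring
          rw [this]; exact U.add_mem (hx a) (hy a)
        neg_mem' := by
          intro x hx a
          have : (-x) * a - a * (-x) = -(x * a - a * x) := by noncomm_ring
          rw [this]; exact U.neg_mem (hx a)
        mul_mem' := by
          intro x y hx hy a
          have : (x * y) * a - a * (x * y) = (x * (y * a) - (y * a) * x) + (y * (a * x) - (a * x) * y) := by
            noncomm_ring
          rw [this]; exact U.add_mem (hx (y * a)) (hy (a * x)) } with hSlie
    have hUS : (U : Set R) ⊆ (Slie : Set R) := fun u hu => fun a => hlie u hu a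
    set T := Subring.closure (U : Set R) with hT
    have hTS : T ≤ Slie := Subring.closure_le.mpr hUS
    have hTlie : ∀ x ∈ T, ∀ a : R, x * a - a * x ∈ U := fun x hx => hTS hx
    have hUT : ∀ u ∈ U, u ∈ T := fun u hu => Subring.subset_closure hu
    set c₀ := s * t - t * s with hc₀
    have hc₀ne : c₀ ≠ 0 := sub_ne_zero.mpr hst
    -- step 6 : y * c₀ ∈ T
    have step6 : ∀ y : R, y * c₀ ∈ T := by
      intro y
      have hid : y * c₀ = (s * (y * t) - (y * t) * s) - (s * y - y * s) * t := by
        rw [hc₀]; noncomm_ring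
      rw [hid]
      exact T.sub_mem (hUT _ (hlie s hs (y * t))) (T.mul_mem (hUT _ (hlie s hs y)) (hUT t ht))
    -- step 7 : x * c₀ * y ∈ T
    have step7 : ∀ x y : R, x * c₀ * y ∈ T := by
      intro x y
      have hid : x * c₀ * y = ((x * c₀) * y - y * (x * c₀)) + (y * x) * c₀ := by noncomm_ring
      rw [hid]
      exact T.add_mem (hUT _ (hTlie _ (step6 x) y)) (step6 (y * x))
    -- step 8 : T = ⊤
    obtain ⟨m, uu, vv, hone⟩ := hsimp c₀ hc₀ne
    have hTall : ∀ z : R, z ∈ T := by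
      intro z
      have hzc : z = ∑ i, (z * uu i) * c₀ * vv i := by
        calc z = z * ∑ i, uu i * c₀ * vv i := by rw [hone, mul_one]
        _ = ∑ i, z * (uu i * c₀ * vv i) := Finset.mul_sum _ _ _
        _ = ∑ i, (z * uu i) * c₀ * vv i := Finset.sum_congr rfl fun i _ => by noncomm_ring
      rw [hzc]
      exact Subring.sum_mem T fun i _ => step7 (z * uu i) (vv i)
    intro x y
    exact hTlie x (hTall x) y
end Herstein
section MatrixHelpers

variable {D : Type*} [DivisionRing D] {n : ℕ} [NeZero n]

lemma stdBasisMatrix_sub (i j : Fin n) (a b : D) :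
    Matrix.single i j (a - b) = Matrix.single i j a - Matrix.single i j b := by
  ext p q
  simp only [Matrix.single, Matrix.sub_apply, Matrix.of_apply]
  split_ifs <;> simp

lemma matrix_nontrivial : Nontrivial (Matrix (Fin n) (Fin n) D) := by
  refine ⟨1, 0, fun h => ?_⟩
  have := congrFun (congrFun h 0) 0
  rw [Matrix.one_apply_eq, Matrix.zero_apply] at this
  exact one_ne_zero this

lemma matrix_unit_sum (c : Matrix (Fin n) (Fin n) D) (hc : c ≠ 0) :
    ∃ (m : ℕ) (u v : Fin m → Matrix (Fin n) (Fin n) D), ∑ i, u i * c * v i = 1 := by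
  classical
  obtain ⟨k, l, hkl⟩ : ∃ k l, c k l ≠ 0 := by
    by_contra hall
    push_neg at hall
    exact hc (by ext p q; rw [hall p q, Matrix.zero_apply])
  refine ⟨n, fun i => Matrix.single i k (c k l)⁻¹, fun i => Matrix.single l i 1, ?_⟩
  ext p q
  rw [Matrix.sum_apply]
  have hterm : ∀ i : Fin n,
      ((Matrix.single i k (c k l)⁻¹ * c * Matrix.single l i 1 :
        Matrix (Fin n) (Fin n) D)) p q
        = if p = i ∧ q = i then (1 : D) else 0 := by
    intro i
    rcases eq_or_ne q i with rfl | hq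
    · rw [Matrix.mul_single_apply_same]
      rcases eq_or_ne p q with rfl | hp
      · rw [Matrix.single_mul_apply_same]
        simp [inv_mul_cancel₀ hkl]
      · rw [Matrix.single_mul_apply_of_ne _ _ _ _ _ hp]
        simp [hp]
    · rw [Matrix.mul_single_apply_of_ne _ _ _ _ _ hq]
      simp [hq]
  rw [Finset.sum_congr rfl fun i _ => hterm i]
  rcases eq_or_ne p q with rfl | hpq
  · rw [Finset.sum_eq_single p]
    · simp [Matrix.one_apply_eq]
    · intro b _ hbp
      rw [if_neg]
      rintro ⟨rfl, -⟩
      exact hbp rfl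
    · intro hp; exact absurd (Finset.mem_univ p) hp
  · rw [Finset.sum_eq_zero, Matrix.one_apply_ne hpq]
    intro i _
    rw [if_neg]
    rintro ⟨rfl, rfl⟩
    exact hpq rfl

end MatrixHelpers

section Assembly

variable {D : Type*} [DivisionRing D] {n : ℕ} [NeZero n]

lemma stdBasisMatrix_sum {ι : Type*} (i j : Fin n) (s : Finset ι) (g : ι → D) :
    Matrix.single i j (∑ x ∈ s, g x) = ∑ x ∈ s, Matrix.single i j (g x) := by
  classical
  refine Finset.induction_on s ?_ ?_
  · simp
  · intro a s ha ih
    rw [Finset.sum_insert ha, Finset.sum_insert ha, Matrix.single_add, ih]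

lemma scalar_eq_sum (μ : Subring.center D) :
    algebraMap (Subring.center D) (Matrix (Fin n) (Fin n) D) μ
      = ∑ j : Fin n, Matrix.single j j (μ : D) := by
  ext p q
  rw [Matrix.algebraMap_matrix_apply, Matrix.sum_apply]
  rcases eq_or_ne p q with rfl | hpq
  · rw [if_pos rfl, Finset.sum_eq_single p]
    · rw [Matrix.single_apply_same]
      rfl
    · intro b _ hbp
      exact Matrix.single_apply_of_ne b b ((μ : D)) p p (by rintro ⟨rfl, -⟩; exact hbp rfl)
    · intro h; exact absurd (Finset.mem_univ p) h
  · rw [if_neg hpq, Finset.sum_eq_zero]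
    intro i _
    exact Matrix.single_apply_of_ne i i ((μ : D)) p q (by rintro ⟨rfl, rfl⟩; exact hpq rfl)

end Assembly

theorem stmt_16 (D : Type*) [DivisionRing D] [CharZero D]
    [Algebra.IsAlgebraic (Subring.center D) D] [Infinite (Subring.center D)]
    (n : ℕ) (hn : 0 < n)
    (f : FreeAlgebra (Subring.center D) ℕ)
    (hPI : ∃ a : ℕ → Matrix (Fin n) (Fin n) D,
      FreeAlgebra.lift (Subring.center D) a f ≠ 0)
    (hC : ∃ a : ℕ → Matrix (Fin n) (Fin n) D,
      FreeAlgebra.lift (Subring.center D) a f ∉ Set.center (Matrix (Fin n) (Fin n) D)) :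
    ∀ X : Matrix (Fin n) (Fin n) D,
      ∃ z ∈ Set.center (Matrix (Fin n) (Fin n) D),
        ∃ c ∈ Submodule.span (Subring.center D)
          (Set.range fun a : ℕ → Matrix (Fin n) (Fin n) D =>
            FreeAlgebra.lift (Subring.center D) a f),
          X = z + c := by
  classical
  intro X
  haveI : NeZero n := ⟨hn.ne'⟩
  haveI : CharZero (Subring.center D) := centerCharZero D
  haveI : Nontrivial (Matrix (Fin n) (Fin n) D) := matrix_nontrivial
  set V := Submodule.span (Subring.center D)
      (Set.range fun a : ℕ → Matrix (Fin n) (Fin n) D =>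
        FreeAlgebra.lift (Subring.center D) a f) with hV
  -- V is a Lie ideal
  have hlie : ∀ u ∈ V, ∀ x : Matrix (Fin n) (Fin n) D, u * x - x * u ∈ V := by
    intro u hu x
    have h1 := lie_mem_span f x u hu
    have h2 := V.neg_mem h1
    rwa [neg_sub] at h2
  -- a noncentral element of V
  obtain ⟨a₀, ha₀⟩ := hC
  have hv₀V : FreeAlgebra.lift (Subring.center D) a₀ f ∈ V :=
    Submodule.subset_span ⟨a₀, rfl⟩
  obtain ⟨w₀, hw₀⟩ : ∃ w, (FreeAlgebra.lift (Subring.center D) a₀ f) * w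
      ≠ w * (FreeAlgebra.lift (Subring.center D) a₀ f) := by
    by_contra hall
    push_neg at hall
    exact ha₀ (Semigroup.mem_center_iff.mpr fun g => (hall g).symm)
  -- all commutators lie in V
  have hcommV : ∀ x y : Matrix (Fin n) (Fin n) D, x * y - y * x ∈ V :=
    herstein (fun c hc => matrix_unit_sum c hc) V hlie _ hv₀V w₀ hw₀
  -- basic matrix-unit memberships
  have hdiag : ∀ (i : Fin n) (d : D),
      Matrix.single i i d - Matrix.single (0 : Fin n) (0 : Fin n) d ∈ V := by
    intro i d
    have h1 : Matrix.single i (0 : Fin n) d * Matrix.single (0 : Fin n) i (1 : D)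
        = Matrix.single i i d := by
      rw [Matrix.single_mul_single_same, mul_one]
    have h2 : Matrix.single (0 : Fin n) i (1 : D) * Matrix.single i (0 : Fin n) d
        = Matrix.single (0 : Fin n) (0 : Fin n) d := by
      rw [Matrix.single_mul_single_same, one_mul]
    rw [← h1, ← h2]
    exact hcommV _ _
  have hoff : ∀ (i j : Fin n), i ≠ j → ∀ d : D, Matrix.single i j d ∈ V := by
    intro i j hij d
    have h1 : Matrix.single i j d * Matrix.single j j (1 : D)
        = Matrix.single i j d := by
      rw [Matrix.single_mul_single_same, mul_one]
    have h2 : Matrix.single j j (1 : D) * Matrix.single i j d = 0 :=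
      Matrix.single_mul_single_of_ne _ _ _ _ (Ne.symm hij) _
    have h3 : Matrix.single i j d
        = Matrix.single i j d * Matrix.single j j (1 : D)
          - Matrix.single j j (1 : D) * Matrix.single i j d := by
      rw [h1, h2, sub_zero]
    rw [h3]
    exact hcommV _ _
  -- the diagonal sum
  set σ : D := ∑ i, X i i with hσ
  -- part 1 : X - E₀₀ σ ∈ V
  have hpart1 : X - Matrix.single (0 : Fin n) (0 : Fin n) σ ∈ V := by
    set T : Fin n → Fin n → Matrix (Fin n) (Fin n) D := fun i j =>
      Matrix.single i j (X i j)
        - (if i = j then Matrix.single (0 : Fin n) (0 : Fin n) (X i i) else 0) with hT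
    have hTmem : ∀ i j, T i j ∈ V := by
      intro i j
      rw [hT]
      by_cases hij : i = j
      · subst hij
        simp only [if_pos rfl]
        exact hdiag i (X i i)
      · simp only [if_neg hij, sub_zero]
        exact hoff i j hij (X i j)
    have hX1 : X - Matrix.single (0 : Fin n) (0 : Fin n) σ = ∑ i, ∑ j, T i j := by
      have hE0σ : Matrix.single (0 : Fin n) (0 : Fin n) σ
          = ∑ i, Matrix.single (0 : Fin n) (0 : Fin n) (X i i) := by
        rw [hσ]; exact stdBasisMatrix_sum (0 : Fin n) (0 : Fin n) Finset.univ (fun i => X i i)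
      calc X - Matrix.single (0 : Fin n) (0 : Fin n) σ
          = (∑ i, ∑ j, Matrix.single i j (X i j))
            - ∑ i, Matrix.single (0 : Fin n) (0 : Fin n) (X i i) := by
            rw [← hE0σ, ← Matrix.matrix_eq_sum_single X]
      _ = ∑ i, ((∑ j, Matrix.single i j (X i j))
            - Matrix.single (0 : Fin n) (0 : Fin n) (X i i)) := by
            rw [Finset.sum_sub_distrib]
      _ = ∑ i, ∑ j, T i j := by
            refine Finset.sum_congr rfl fun i _ => ?_
            rw [hT]
            rw [Finset.sum_sub_distrib]
            congr 1
            rw [Finset.sum_ite_eq]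
            simp
    rw [hX1]
    exact Submodule.sum_mem V fun i _ => Submodule.sum_mem V fun j _ => hTmem i j
  -- part 2 : Harris for the diagonal sum
  obtain ⟨lam, hlam⟩ := harris_center (D := D) σ
  have hE00span : ∀ y : D,
      y ∈ Submodule.span (Subring.center D) {y : D | ∃ a b : D, y = a * b - b * a} →
      Matrix.single (0 : Fin n) (0 : Fin n) y ∈ V := by
    intro y hy
    induction hy using Submodule.span_induction with
    | mem x hx =>
        obtain ⟨a, b, rfl⟩ := hx
        have : Matrix.single (0 : Fin n) (0 : Fin n) (a * b - b * a)
            = Matrix.single (0 : Fin n) (0 : Fin n) a * Matrix.single (0 : Fin n) (0 : Fin n) b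
              - Matrix.single (0 : Fin n) (0 : Fin n) b * Matrix.single (0 : Fin n) (0 : Fin n) a := by
          rw [Matrix.single_mul_single_same, Matrix.single_mul_single_same]
          exact stdBasisMatrix_sub _ _ _ _
        rw [this]
        exact hcommV _ _
    | zero => rw [Matrix.single_zero]; exact V.zero_mem
    | add x y _ _ hx hy => rw [Matrix.single_add]; exact V.add_mem hx hy
    | smul t x _ hx =>
        rw [← Matrix.smul_single]
        exact V.smul_mem t hx
  have hpart2 : Matrix.single (0 : Fin n) 0
      (σ - algebraMap (Subring.center D) D lam) ∈ V := hE00span _ hlam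
  -- part 3
  set μ : Subring.center D := ((n : ℕ) : Subring.center D)⁻¹ * lam with hμ
  set z : Matrix (Fin n) (Fin n) D := algebraMap (Subring.center D) _ μ with hz
  have hnne : ((n : ℕ) : Subring.center D) ≠ 0 := Nat.cast_ne_zero.mpr hn.ne'
  have hlamsum : ((lam : D)) = ∑ _j : Fin n, ((μ : D)) := by
    rw [Finset.sum_const, Finset.card_univ, Fintype.card_fin]
    have h1 : (n : ℕ) • μ = lam := by
      rw [hμ, nsmul_eq_mul, ← mul_assoc, mul_inv_cancel₀ hnne, one_mul]
    calc (lam : D) = (((n : ℕ) • μ : Subring.center D) : D) := by rw [h1]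
    _ = (n : ℕ) • ((μ : D)) := by
        rw [← Nat.cast_smul_eq_nsmul (Subring.center D), ← Nat.cast_smul_eq_nsmul (Subring.center D)]
        rfl
  have hpart3 : Matrix.single (0 : Fin n) (0 : Fin n) (algebraMap (Subring.center D) D lam) - z ∈ V := by
    have hzz : z = ∑ j : Fin n, Matrix.single j j ((μ : D)) := scalar_eq_sum μ
    have hE00lam : Matrix.single (0 : Fin n) (0 : Fin n) (algebraMap (Subring.center D) D lam)
        = ∑ _j : Fin n, Matrix.single (0 : Fin n) (0 : Fin n) ((μ : D)) := by
      have : (algebraMap (Subring.center D) D lam) = ((lam : D)) := rfl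
      rw [this, hlamsum, stdBasisMatrix_sum]
    rw [hzz, hE00lam, ← Finset.sum_sub_distrib]
    refine Submodule.sum_mem V fun j _ => ?_
    have := V.neg_mem (hdiag j ((μ : D)))
    rwa [neg_sub] at this
  -- package
  refine ⟨z, Semigroup.mem_center_iff.mpr fun g => (Algebra.commutes μ g).symm, X - z, ?_, by abel⟩
  have hdecomp : X - z = (X - Matrix.single (0 : Fin n) (0 : Fin n) σ)
      + Matrix.single (0 : Fin n) (0 : Fin n) (σ - algebraMap (Subring.center D) D lam)
      + (Matrix.single (0 : Fin n) (0 : Fin n) (algebraMap (Subring.center D) D lam) - z) := by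
    rw [stdBasisMatrix_sub]
    abel
  rw [hdecomp]
  exact V.add_mem (V.add_mem hpart1 hpart2) hpart3
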